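/- Let S, A, T, 𝒫 be as in the MDP context. Let V1, V2, V_Σ : S × 𝒫 → ℝ be mixture-affine and satisfy the generalized Bellman form with reward/discount pairs (R1, γ1), (R2, γ2), (R_Σ, γ_Σ) respectively. Fix (s,a) ∈ S × A and suppose the conflict condition holds for (V1, V2) at (s,a). Suppose there are weights w1(s) ≠ 0, w2(s) ≠ 0 with V_Σ(s, a·Π) = w1(s)·V1(s, a·Π) + w2(s)·V2(s, a·Π) for all Π ∈ 𝒫, and suppose there are next-step weights w1(sa), w2(sa) and a constant k ∈ ℝ with V̄_Σ(s,a,Π) = k + w1(sa)·V̄1(s,a,Π) + w2(sa)·V̄2(s,a,Π) for all Π ∈ 𝒫. Then w1(s)·γ1(s,a) = w1(sa)·γ_Σ(s,a) and w2(s)·γ2(s,a) = w2(sa)·γ_Σ(s,a); consequently, if w1(sa), w1(s), γ1(s,a), and γ_Σ(s,a) are all nonzero, then w2(sa)/w1(sa) = (w2(s)·γ2(s,a))/(w1(s)·γ1(s,a)). -/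
import Mathlib


open scoped BigOperators

/-- The one-step expected value `V̄(s,a,π) = E_{s' ~ T(s,a)}[V(s',π)]`. -/
noncomputable def Vbar {S A P : Type*} [Fintype S]
    (T : S → A → S → ℝ) (V : S → P → ℝ) (s : S) (a : A) (π : P) : ℝ :=
  ∑ s', T s a s' * V s' π

/-- `V` is mixture-affine with respect to the policy-mixing operation `mix`. -/
def MixAffine {S P : Type*} (mix : ℝ → P → P → P) (V : S → P → ℝ) : Prop :=
  ∀ (s : S) (β : ℝ), 0 ≤ β → β ≤ 1 → ∀ π ω : P,
    V s (mix β π ω) = β * V s π + (1 - β) * V s ω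

/-- `V` satisfies the generalized Bellman form with reward `R` and discount `γ`. -/
def BellmanForm {S A P : Type*} [Fintype S] (T : S → A → S → ℝ) (act : A → P → P)
    (V : S → P → ℝ) (R : S → A → ℝ) (γ : S → A → ℝ) : Prop :=
  ∀ (s : S) (a : A) (π : P), V s (act a π) = R s a + γ s a * Vbar T V s a π

/-- The conflict condition for `(V1, V2)` at `(s, a)`: there are policies `π, ω, l`
on which the one-step expected values of `V1` and `V2` are oppositely ordered, with
non-symmetric crossing points `β1 ≠ β2`. -/
def Conflict {S A P : Type*} [Fintype S]
    (T : S → A → S → ℝ) (V1 V2 : S → P → ℝ) (s : S) (a : A) : Prop :=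
  ∃ π ω l : P,
    Vbar T V1 s a π > Vbar T V1 s a l ∧ Vbar T V1 s a l > Vbar T V1 s a ω ∧
    Vbar T V2 s a ω > Vbar T V2 s a l ∧ Vbar T V2 s a l > Vbar T V2 s a π ∧
    (Vbar T V1 s a l - Vbar T V1 s a ω) / (Vbar T V1 s a π - Vbar T V1 s a ω) ≠
      (Vbar T V2 s a l - Vbar T V2 s a ω) / (Vbar T V2 s a π - Vbar T V2 s a ω)

/-- **Weight-update equalities (Theorem 5, equation (11)).** Under the conflict
condition at `(s, a)`, if `Vagg(s, a·π) = w1(s)·V1(s, a·π) + w2(s)·V2(s, a·π)` and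
`V̄agg(s,a,·) = k + w1(sa)·V̄1(s,a,·) + w2(sa)·V̄2(s,a,·)`, then
`w1(s)·γ1(s,a) = w1(sa)·γagg(s,a)` and `w2(s)·γ2(s,a) = w2(sa)·γagg(s,a)`; consequently,
when the relevant quantities are nonzero, `w2(sa)/w1(sa) = w2(s)·γ2(s,a)/(w1(s)·γ1(s,a))`. -/
theorem weight_update_equalities
    {S A P : Type*} [Fintype S] [Nonempty S] [Fintype A] [Nonempty A]
    (T : S → A → S → ℝ)
    (hT0 : ∀ s a s', 0 ≤ T s a s') (hT1 : ∀ s a, ∑ s', T s a s' = 1)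
    (act : A → P → P) (mix : ℝ → P → P → P)
    (hact_mix : ∀ (a : A) (β : ℝ) (π ω : P), act a (mix β π ω) = mix β (act a π) (act a ω))
    (V1 V2 Vagg : S → P → ℝ)
    (haff1 : MixAffine mix V1) (haff2 : MixAffine mix V2) (haffagg : MixAffine mix Vagg)
    (R1 R2 Ragg γ1 γ2 γagg : S → A → ℝ)
    (hB1 : BellmanForm T act V1 R1 γ1)
    (hB2 : BellmanForm T act V2 R2 γ2)
    (hBagg : BellmanForm T act Vagg Ragg γagg)
    (s : S) (a : A) (hconf : Conflict T V1 V2 s a)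
    (w1s w2s : ℝ) (hw1s : w1s ≠ 0) (hw2s : w2s ≠ 0)
    (hagg : ∀ π : P, Vagg s (act a π) = w1s * V1 s (act a π) + w2s * V2 s (act a π))
    (w1sa w2sa k : ℝ)
    (hnext : ∀ π : P, Vbar T Vagg s a π =
        k + w1sa * Vbar T V1 s a π + w2sa * Vbar T V2 s a π) :
    w1s * γ1 s a = w1sa * γagg s a ∧ w2s * γ2 s a = w2sa * γagg s a ∧
      (w1sa ≠ 0 → γ1 s a ≠ 0 → γagg s a ≠ 0 →
        w2sa / w1sa = (w2s * γ2 s a) / (w1s * γ1 s a)) := by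
  obtain ⟨π, ω, l, h1, h2, h3, h4, hβ⟩ := hconf
  -- abbreviations
  set A1 := Vbar T V1 s a π with hA1
  set B1 := Vbar T V1 s a ω with hB1'
  set L1 := Vbar T V1 s a l with hL1
  set A2 := Vbar T V2 s a π with hA2
  set B2 := Vbar T V2 s a ω with hB2'
  set L2 := Vbar T V2 s a l with hL2
  have key : ∀ x : P,
      (w1s * γ1 s a - w1sa * γagg s a) * Vbar T V1 s a x +
        (w2s * γ2 s a - w2sa * γagg s a) * Vbar T V2 s a x =
      Ragg s a + γagg s a * k - w1s * R1 s a - w2s * R2 s a := by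
    intro x
    have h := hagg x
    rw [hBagg, hB1, hB2, hnext] at h
    linear_combination -h
  have eπ := key π
  have eω := key ω
  have el := key l
  set c1 := w1s * γ1 s a - w1sa * γagg s a with hc1def
  set c2 := w2s * γ2 s a - w2sa * γagg s a with hc2def
  have eq1 : c1 * (A1 - B1) + c2 * (A2 - B2) = 0 := by linear_combination eπ - eω
  have eq2 : c1 * (L1 - B1) + c2 * (L2 - B2) = 0 := by linear_combination el - eω
  have hD1 : A1 - B1 > 0 := by linarith
  have hD2 : A2 - B2 < 0 := by linarith
  have hd1 : L1 - B1 > 0 := by linarith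
  have hd2 : L2 - B2 < 0 := by linarith
  have hcross : (L1 - B1) * (A2 - B2) ≠ (L2 - B2) * (A1 - B1) := by
    intro h
    apply hβ
    rw [div_eq_div_iff (by linarith) (ne_of_lt hD2)]
    linarith [h]
  have hc1 : c1 = 0 := by
    by_contra hc
    apply hcross
    have h5 : c1 * ((L1 - B1) * (A2 - B2) - (L2 - B2) * (A1 - B1)) = 0 := by
      linear_combination (A2 - B2) * eq2 - (L2 - B2) * eq1
    rcases mul_eq_zero.mp h5 with h | h
    · exact absurd h hc
    · linarith
  have hc2 : c2 = 0 := by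
    have : c2 * (A2 - B2) = 0 := by linear_combination eq1 - (A1 - B1) * hc1
    rcases mul_eq_zero.mp this with h | h
    · exact h
    · linarith
  have hc1' : w1s * γ1 s a = w1sa * γagg s a := by linear_combination hc1
  have hc2' : w2s * γ2 s a = w2sa * γagg s a := by linear_combination hc2
  refine ⟨hc1', hc2', fun hw1sa hγ1 hγagg => ?_⟩
  have hwγ : w1s * γ1 s a ≠ 0 := mul_ne_zero hw1s hγ1
  rw [div_eq_div_iff hw1sa hwγ]
  linear_combination w2sa * hc1' - w1sa * hc2'
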